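/- Let σ_X = σ_Y = 1, let n ≥ 1 and let Z̄_n be the mean of n independent PN(μ_X,μ_Y;1,1;ρ) random variables. Then for every t ∈ ℝ the characteristic function of Z̄_n is given by E[exp(i t Z̄_n)] = ((1−(1+ρ)it/n)(1+(1−ρ)it/n))^{−n/2} · exp( (−(μ_X²+μ_Y²−2ρμ_Xμ_Y)t²/n + 2μ_Xμ_Y it) / (2(1−(1+ρ)it/n)(1+(1−ρ)it/n)) ), where the complex power w^{−n/2} is the principal branch (well-defined since the complex number (1−(1+ρ)it/n)(1+(1−ρ)it/n) = 1 + (1−ρ²)ت²/n² − 2ρit/n has strictly positive real part). -/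

import Mathlib

open MeasureTheory ProbabilityTheory

open scoped NNReal ENNReal
open Complex Real

lemma myOfReal_mul_cpow {r : ℝ} (hr : 0 < r) {w : ℂ} (hw : w ≠ 0) (a : ℂ) :
    ((r : ℂ) * w) ^ a = (r : ℂ) ^ a * w ^ a := by
  have hr' : (r : ℂ) ≠ 0 := by exact_mod_cast hr.ne'
  rw [cpow_def_of_ne_zero (mul_ne_zero hr' hw), cpow_def_of_ne_zero hr',
    cpow_def_of_ne_zero hw, Complex.log_ofReal_mul hr hw, add_mul, Complex.exp_add,
    ← Complex.ofReal_log hr.le]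

lemma integral_gaussian_cexp {b : ℂ} (hb : b.re < 2⁻¹) (c d : ℂ) :
    ∫ x : ℝ, Complex.exp (b * x ^ 2 + c * x + d) ∂(gaussianReal 0 1)
      = (1 - 2 * b) ^ (-(2⁻¹) : ℂ) * Complex.exp (d - c ^ 2 / (4 * (b - 2⁻¹))) := by
  have hA : (1 - 2 * b) ≠ 0 := by
    intro h
    have : (1 - 2 * b).re = 0 := by rw [h]; simp
    simp [Complex.sub_re, Complex.mul_re] at this
    linarith
  have harg : (1 - 2 * b).arg ≠ π := by
    intro h
    rw [Complex.arg_eq_pi_iff] at h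
    have := h.1
    simp [Complex.sub_re, Complex.mul_re] at this
    linarith
  have h' : -(b - 2⁻¹) ≠ 0 := by intro h; apply hA; linear_combination 2 * h
  have hpi : (↑π / -(b - 2⁻¹) : ℂ) = ((2 * π : ℝ) : ℂ) * (1 - 2 * b)⁻¹ := by
    rw [← div_eq_mul_inv, div_eq_div_iff h' hA]
    push_cast
    ring
  have h2pi : ((2 * π : ℝ) : ℂ) ^ ((1/2 : ℂ)) = ((Real.sqrt (2 * π) : ℝ) : ℂ) := by
    rw [show (1/2 : ℂ) = ((1/2 : ℝ) : ℂ) by norm_num, ← Complex.ofReal_cpow (by positivity)]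
    norm_num [Real.sqrt_eq_rpow]
  have hpref : ((Real.sqrt (2 * π) : ℝ) : ℂ)⁻¹ * (↑π / -(b - 2⁻¹)) ^ (1/2 : ℂ)
      = (1 - 2 * b) ^ (-(2⁻¹) : ℂ) := by
    rw [hpi, myOfReal_mul_cpow (by positivity) (inv_ne_zero hA),
      inv_cpow _ _ harg, ← cpow_neg, h2pi, ← mul_assoc,
      inv_mul_cancel₀ (Complex.ofReal_ne_zero.mpr (by positivity)), one_mul]
    norm_num
  have h1 : gaussianReal 0 1 = volume.withDensity (gaussianPDF 0 1) :=
    gaussianReal_of_var_ne_zero 0 one_ne_zero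
  rw [h1]
  have h2 : gaussianPDF 0 1 = fun x => ((Real.toNNReal (gaussianPDFReal 0 1 x) : ℝ≥0) : ℝ≥0∞) :=
    rfl
  rw [h2, integral_withDensity_eq_integral_smul
    (f := fun x : ℝ => (gaussianPDFReal 0 1 x).toNNReal)
    ((measurable_gaussianPDFReal 0 1).real_toNNReal)
    (fun x : ℝ => Complex.exp (b * (x:ℂ) ^ 2 + c * (x:ℂ) + d))]
  have h3 : ∀ x : ℝ, (Real.toNNReal (gaussianPDFReal 0 1 x) : ℝ≥0)
        • Complex.exp (b * x ^ 2 + c * x + d)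
      = ((Real.sqrt (2 * π) : ℝ) : ℂ)⁻¹ * Complex.exp ((b - 2⁻¹) * x ^ 2 + c * x + d) := by
    intro x
    rw [NNReal.smul_def, Real.coe_toNNReal _ (gaussianPDFReal_nonneg 0 1 x), gaussianPDFReal]
    push_cast
    rw [Complex.real_smul]
    push_cast
    rw [mul_assoc, ← Complex.exp_add]
    simp only [mul_one]
    congr 1
    ring
  simp_rw [h3]
  rw [integral_const_mul,
    integral_cexp_quadratic (by simp only [Complex.sub_re]; simpa using hb) c d,
    ← mul_assoc, hpref]

/-- The product-normal law `PN(μX, μY; σX², σY²; ρ)`: the law of `X * Y` where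
`X = μX + σX * U`, `Y = μY + σY * (ρ * U + √(1 - ρ²) * V)` and `U, V` are independent
standard normal random variables. -/
noncomputable def PN (μX μY σX σY ρ : ℝ) : Measure ℝ :=
  Measure.map
    (fun p : ℝ × ℝ =>
      (μX + σX * p.1) * (μY + σY * (ρ * p.1 + Real.sqrt (1 - ρ ^ 2) * p.2)))
    ((gaussianReal 0 1).prod (gaussianReal 0 1))

lemma charPN (μX μY ρ : ℝ) (hρ₁ : -1 < ρ) (hρ₂ : ρ < 1) (s : ℝ) :
    ∫ x, Complex.exp (Complex.I * s * x) ∂(PN μX μY 1 1 ρ)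
      = ((1 - (1 + (ρ:ℂ)) * Complex.I * s) * (1 + (1 - (ρ:ℂ)) * Complex.I * s)) ^ (-(2⁻¹) : ℂ)
        * Complex.exp ((-((μX:ℂ)^2 + (μY:ℂ)^2 - 2*(ρ:ℂ)*(μX:ℂ)*(μY:ℂ)) * (s:ℂ)^2
              + 2*(μX:ℂ)*(μY:ℂ)*Complex.I*(s:ℂ))
            / (2 * ((1 - (1 + (ρ:ℂ)) * Complex.I * s) * (1 + (1 - (ρ:ℂ)) * Complex.I * s)))) := by
  have hρsq : (0:ℝ) ≤ 1 - ρ ^ 2 := by nlinarith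
  set c₀ : ℝ := Real.sqrt (1 - ρ ^ 2) with hc₀
  have hc : (c₀:ℂ) ^ 2 = 1 - (ρ:ℂ) ^ 2 := by
    have h : c₀ ^ 2 = 1 - ρ ^ 2 := Real.sq_sqrt hρsq
    rw [← Complex.ofReal_pow, h]
    push_cast
    ring
  set g : ℝ × ℝ → ℝ := fun p => (μX + 1 * p.1) * (μY + 1 * (ρ * p.1 + c₀ * p.2)) with hg
  have hgm : Measurable g := by fun_prop
  set γ : Measure ℝ := gaussianReal 0 1
  have key : ∫ x, Complex.exp (Complex.I * s * x) ∂(PN μX μY 1 1 ρ)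
      = ∫ p : ℝ × ℝ, Complex.exp (Complex.I * s * (g p)) ∂(γ.prod γ) := by
    rw [PN, integral_map hgm.aemeasurable]
    exact (Complex.continuous_exp.comp (by continuity)).aestronglyMeasurable
  rw [key]
  have hmeas : AEStronglyMeasurable (fun p : ℝ × ℝ => Complex.exp (Complex.I * s * (g p)))
      (γ.prod γ) :=
    (Complex.continuous_exp.comp (by continuity : Continuous fun p : ℝ × ℝ =>
      Complex.I * s * (g p))).aestronglyMeasurable
  have hint : Integrable (fun p : ℝ × ℝ => Complex.exp (Complex.I * s * (g p))) (γ.prod γ) := by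
    refine (integrable_const (1:ℝ)).mono' hmeas ?_
    filter_upwards with p
    rw [Complex.norm_exp]
    simp [Complex.mul_re]
  rw [integral_prod _ hint]
  set b₁ : ℂ := Complex.I * ((s*ρ : ℝ):ℂ) - ((s^2*(1-ρ^2)/2 : ℝ):ℂ) with hb₁def
  set c₁ : ℂ := Complex.I * ((s*(ρ*μX+μY) : ℝ):ℂ) - ((s^2*(1-ρ^2)*μX : ℝ):ℂ) with hc₁def
  set d₁ : ℂ := Complex.I * ((s*(μX*μY) : ℝ):ℂ) - ((s^2*(1-ρ^2)*μX^2/2 : ℝ):ℂ) with hd₁def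
  have hin : ∀ u : ℝ, (∫ v : ℝ, Complex.exp (Complex.I * s * (g (u, v))) ∂γ)
      = Complex.exp (b₁ * (u:ℂ)^2 + c₁ * (u:ℂ) + d₁) := by
    intro u
    have hv : ∀ v : ℝ, Complex.I * s * (g (u, v))
        = (0:ℂ) * (v:ℂ)^2 + (Complex.I*s*(μX+u)*c₀) * (v:ℂ)
          + Complex.I*s*((μX+u)*(μY+ρ*u)) := by
      intro v; simp only [hg]; push_cast; ring
    simp_rw [hv]
    rw [integral_gaussian_cexp (by norm_num) _ _]
    rw [mul_zero, sub_zero, one_cpow, one_mul]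
    congr 1
    rw [hb₁def, hc₁def, hd₁def]
    push_cast
    linear_combination (-(s:ℂ)^2 * ((μX:ℂ)+(u:ℂ))^2 / 2) * hc
      + ((s:ℂ)^2 * (c₀:ℂ)^2 * ((μX:ℂ)+(u:ℂ))^2 / 2) * Complex.I_sq
  simp_rw [hin]
  have hb₁ : b₁.re < 2⁻¹ := by
    rw [hb₁def]
    simp only [Complex.sub_re, Complex.mul_re, Complex.I_re, Complex.ofReal_re,
      Complex.I_im, Complex.ofReal_im]
    nlinarith [sq_nonneg s, sq_nonneg ρ, sq_nonneg (s*ρ)]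
  rw [integral_gaussian_cexp hb₁]
  set A : ℂ := (1 - (1 + (ρ:ℂ)) * Complex.I * s) * (1 + (1 - (ρ:ℂ)) * Complex.I * s) with hA
  have hAne : A ≠ 0 := by
    apply mul_ne_zero
    · intro h
      have : (1 - (1 + (ρ:ℂ)) * Complex.I * s).re = 0 := by rw [h]; simp
      simp [Complex.sub_re, Complex.mul_re, Complex.add_re] at this
    · intro h
      have : (1 + (1 - (ρ:ℂ)) * Complex.I * s).re = 0 := by rw [h]; simp
      simp [Complex.add_re, Complex.mul_re, Complex.sub_re] at this
  have hone : 1 - 2 * b₁ = A := by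
    rw [hA, hb₁def]; push_cast
    linear_combination ((s:ℂ)^2*(1-(ρ:ℂ)^2)) * Complex.I_sq
  rw [hone]
  congr 1
  have h4 : 4 * (b₁ - 2⁻¹) = -2 * A := by
    rw [hA, hb₁def]; push_cast
    linear_combination (-2*(s:ℂ)^2*(1-(ρ:ℂ)^2)) * Complex.I_sq
  rw [h4]
  have hnum : 2*A*d₁ + c₁^2
      = -((μX:ℂ)^2 + (μY:ℂ)^2 - 2*(ρ:ℂ)*(μX:ℂ)*(μY:ℂ)) * (s:ℂ)^2
          + 2*(μX:ℂ)*(μY:ℂ)*Complex.I*(s:ℂ) := by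
    rw [hA, hc₁def, hd₁def]; push_cast
    linear_combination ((s:ℂ)^2*(μY:ℂ)^2 + (-2)*(s:ℂ)^2*(ρ:ℂ)*(μX:ℂ)*(μY:ℂ)
      + (s:ℂ)^2*(ρ:ℂ)^2*(μX:ℂ)^2 + (s:ℂ)^4*(μX:ℂ)^2 + (-2)*(s:ℂ)^4*(ρ:ℂ)^2*(μX:ℂ)^2
      + (s:ℂ)^4*(ρ:ℂ)^4*(μX:ℂ)^2 + (-2)*Complex.I*(s:ℂ)^3*(μX:ℂ)*(μY:ℂ)
      + 2*Complex.I*(s:ℂ)^3*(ρ:ℂ)^2*(μX:ℂ)*(μY:ℂ)) * Complex.I_sq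
  have hsplit : d₁ - c₁^2 / (-2*A) = (2*A*d₁ + c₁^2) / (2*A) := by
    field_simp
    ring
  rw [hsplit, hnum]


/-- The law of the mean `Z̄ₙ = n⁻¹ ∑ᵢ Zᵢ` of `n` independent random variables with law
`PN(μX, μY; σX², σY²; ρ)`. -/
noncomputable def PNbar (n : ℕ) (μX μY σX σY ρ : ℝ) : Measure ℝ :=
  Measure.map (fun ω : Fin n → ℝ => (∑ i, ω i) / (n : ℝ))
    (Measure.pi fun _ : Fin n => PN μX μY σX σY ρ)

lemma integral_pi_pow (μ : Measure ℝ) [SigmaFinite μ] (n : ℕ) (f : ℝ → ℂ) :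
    ∫ x : Fin n → ℝ, ∏ i, f (x i) ∂(Measure.pi fun _ : Fin n => μ)
      = (∫ x, f x ∂μ) ^ n := by
  letI : MeasureSpace ℝ := ⟨μ⟩
  haveI : SigmaFinite (volume : Measure ℝ) := ‹_›
  simpa using MeasureTheory.integral_fintype_prod_eq_pow (ι := Fin n) f (μ := μ)

/-- Characteristic function of the mean `Z̄ₙ` of `n` independent `PN(μX, μY; 1, 1; ρ)`
random variables: `E[exp(itZ̄ₙ)]` equals
`((1-(1+ρ)it/n)(1+(1-ρ)it/n))^(-n/2) · exp((-(μX²+μY²-2ρμXμY)t²/n + 2μXμY it) / (2(1-(1+ρ)it/n)(1+(1-ρ)it/n)))`,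
where the complex power is the principal branch (Lean's `Complex.cpow`). -/
theorem charFun_PNbar
    (μX μY ρ : ℝ) (hρ₁ : -1 < ρ) (hρ₂ : ρ < 1) (n : ℕ) (hn : 1 ≤ n) (t : ℝ) :
    ∫ x, Complex.exp (Complex.I * (t : ℂ) * (x : ℂ)) ∂(PNbar n μX μY 1 1 ρ)
      = ((1 - (1 + (ρ : ℂ)) * Complex.I * (t : ℂ) / (n : ℂ))
            * (1 + (1 - (ρ : ℂ)) * Complex.I * (t : ℂ) / (n : ℂ))) ^ (-(n : ℂ) / 2)
          * Complex.exp
              ((-((μX : ℂ) ^ 2 + (μY : ℂ) ^ 2 - 2 * (ρ : ℂ) * (μX : ℂ) * (μY : ℂ))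
                    * (t : ℂ) ^ 2 / (n : ℂ)
                  + 2 * (μX : ℂ) * (μY : ℂ) * Complex.I * (t : ℂ))
                / (2 * ((1 - (1 + (ρ : ℂ)) * Complex.I * (t : ℂ) / (n : ℂ))
                    * (1 + (1 - (ρ : ℂ)) * Complex.I * (t : ℂ) / (n : ℂ))))) := by
  have hn0 : (n:ℂ) ≠ 0 := Nat.cast_ne_zero.mpr (by omega)
  have hn0' : (n:ℝ) ≠ 0 := Nat.cast_ne_zero.mpr (by omega)
  haveI : IsProbabilityMeasure (PN μX μY 1 1 ρ) := by
    rw [PN]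
    exact Measure.isProbabilityMeasure_map (by fun_prop)
  have hsum : Measurable (fun ω : Fin n → ℝ => (∑ i, ω i) / (n : ℝ)) := by fun_prop
  rw [PNbar, integral_map hsum.aemeasurable
    (by continuity : Continuous fun x : ℝ =>
      Complex.exp (Complex.I * (t:ℂ) * (x:ℂ))).aestronglyMeasurable]
  have hrw : ∀ ω : Fin n → ℝ,
      Complex.exp (Complex.I * (t:ℂ) * (((∑ i, ω i) / (n:ℝ) : ℝ) : ℂ))
        = ∏ i, Complex.exp (Complex.I * ((t/(n:ℝ) : ℝ) : ℂ) * (ω i : ℂ)) := by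
    intro ω
    rw [← Complex.exp_sum]
    congr 1
    push_cast
    rw [← Finset.mul_sum]
    field_simp
  simp_rw [hrw]
  rw [integral_pi_pow (PN μX μY 1 1 ρ) n
    (fun x : ℝ => Complex.exp (Complex.I * ((t/(n:ℝ) : ℝ) : ℂ) * (x : ℂ)))]
  rw [charPN μX μY ρ hρ₁ hρ₂ (t/(n:ℝ))]
  rw [mul_pow, ← Complex.cpow_nat_mul, ← Complex.exp_nat_mul]
  have hA1 : (1 - (1 + (ρ:ℂ)) * Complex.I * ((t/(n:ℝ) : ℝ) : ℂ)) ≠ 0 := by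
    intro h
    have : (1 - (1 + (ρ:ℂ)) * Complex.I * ((t/(n:ℝ) : ℝ) : ℂ)).re = 0 := by rw [h]; simp
    simp [Complex.sub_re, Complex.mul_re, Complex.add_re] at this
  have hA2 : (1 + (1 - (ρ:ℂ)) * Complex.I * ((t/(n:ℝ) : ℝ) : ℂ)) ≠ 0 := by
    intro h
    have : (1 + (1 - (ρ:ℂ)) * Complex.I * ((t/(n:ℝ) : ℝ) : ℂ)).re = 0 := by rw [h]; simp
    simp [Complex.add_re, Complex.mul_re, Complex.sub_re] at this
  have h1 : ((1 - (1 + (ρ:ℂ)) * Complex.I * ((t/(n:ℝ) : ℝ) : ℂ))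
        * (1 + (1 - (ρ:ℂ)) * Complex.I * ((t/(n:ℝ) : ℝ) : ℂ)))
      = ((1 - (1 + (ρ : ℂ)) * Complex.I * (t : ℂ) / (n : ℂ))
        * (1 + (1 - (ρ : ℂ)) * Complex.I * (t : ℂ) / (n : ℂ))) := by
    push_cast
    ring
  have h2 : ((n:ℕ):ℂ) * (-(2⁻¹)) = -(n : ℂ) / 2 := by ring
  have h3 : ((n:ℕ):ℂ) * ((-((μX:ℂ)^2 + (μY:ℂ)^2 - 2*(ρ:ℂ)*(μX:ℂ)*(μY:ℂ)) * (((t/(n:ℝ) : ℝ)):ℂ)^2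
              + 2*(μX:ℂ)*(μY:ℂ)*Complex.I*(((t/(n:ℝ) : ℝ)):ℂ))
            / (2 * ((1 - (1 + (ρ:ℂ)) * Complex.I * ((t/(n:ℝ) : ℝ) : ℂ))
                * (1 + (1 - (ρ:ℂ)) * Complex.I * ((t/(n:ℝ) : ℝ) : ℂ)))))
      = ((-((μX : ℂ) ^ 2 + (μY : ℂ) ^ 2 - 2 * (ρ : ℂ) * (μX : ℂ) * (μY : ℂ))
              * (t : ℂ) ^ 2 / (n : ℂ)
            + 2 * (μX : ℂ) * (μY : ℂ) * Complex.I * (t : ℂ))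
          / (2 * ((1 - (1 + (ρ : ℂ)) * Complex.I * (t : ℂ) / (n : ℂ))
              * (1 + (1 - (ρ : ℂ)) * Complex.I * (t : ℂ) / (n : ℂ))))) := by
    rw [← h1, ← mul_div_assoc]
    congr 1
    push_cast
    field_simp
  rw [h2, h3, h1]
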